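/- Let s ∈ (0, 1/2) with t₁(s) = 7 + 3^{3−2s} − 2^{5−2s} > 0, let h > 0, and let N ≥ 2 be an integer satisfying N ≤ 2 ( γ(s) / t₁(s) )^{1/(2s)}, where γ(s) = (1−2s)(1−s)(3−2s). Let S be the (N−1)×(N−1) matrix with entries S_{kj} = A_s h^{1−2s} t_{|k−j|}(s). Then S is strictly diagonally dominant: S_{kk} > Σ_{j≠k} |S_{kj}| for every 1 ≤ k ≤ N−1. -/

import Mathlib

open MeasureTheory intervalIntegral Set
lemma rpow_neg_midpoint {q a b : ℝ} (hq : 0 < q) (ha : 0 < a) (hb : 0 < b) :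
    2 * ((a+b)/2) ^ (-q) ≤ a ^ (-q) + b ^ (-q) := by
  have hg : (0:ℝ) < Real.sqrt (a*b) := Real.sqrt_pos.2 (by positivity)
  have hab : Real.sqrt (a*b) ≤ (a+b)/2 := by
    nlinarith [sq_nonneg (Real.sqrt a - Real.sqrt b), Real.sq_sqrt ha.le, Real.sq_sqrt hb.le,
      Real.sqrt_mul ha.le b]
  have h1 : ((a+b)/2) ^ (-q) ≤ (Real.sqrt (a*b)) ^ (-q) :=
    Real.rpow_le_rpow_of_nonpos hg hab (by linarith)
  have h2 : (Real.sqrt (a*b)) ^ (-q) = a ^ (-q/2) * b ^ (-q/2) := by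
    rw [Real.sqrt_eq_rpow, ← Real.rpow_mul (by positivity : (0:ℝ) ≤ a*b),
      show (1/2:ℝ) * -q = -q/2 by ring, Real.mul_rpow ha.le hb.le]
  have ha2 : a ^ (-q/2) * a ^ (-q/2) = a ^ (-q) := by
    rw [← Real.rpow_add ha]; ring_nf
  have hb2 : b ^ (-q/2) * b ^ (-q/2) = b ^ (-q) := by
    rw [← Real.rpow_add hb]; ring_nf
  nlinarith [sq_nonneg (a ^ (-q/2) - b ^ (-q/2))]

lemma rpow_neg_strict_anti {q a b : ℝ} (hq : 0 < q) (ha : 0 < a) (hab : a < b) :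
    b ^ (-q) < a ^ (-q) :=
  Real.rpow_lt_rpow_of_neg ha hab (by linarith)

lemma integrable_shift_rpow {q z : ℝ} (hq : 0 < q) (hz : 0 < z) :
    IntervalIntegrable (fun u : ℝ => u ^ (-q)) volume z (z+1) := by
  apply ContinuousOn.intervalIntegrable
  intro x hx
  rw [uIcc_of_le (by linarith)] at hx
  exact (Real.continuousAt_rpow_const x _ (Or.inl (by have := hx.1; intro hc; nlinarith))).continuousWithinAt

lemma avg_rpow_neg {q z : ℝ} (hq : 0 < q) (hz : 0 < z) :
    (z + 1/2) ^ (-q) ≤ ∫ u in z..(z+1), u ^ (-q) := by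
  have hcomp : (∫ u in (0:ℝ)..1, (z + u) ^ (-q)) = ∫ u in z..(z+1), u ^ (-q) := by
    simpa using intervalIntegral.integral_comp_add_left (a := (0:ℝ)) (b := 1)
      (fun u : ℝ => u ^ (-q)) z
  have hint : IntervalIntegrable (fun u : ℝ => (z + u) ^ (-q)) volume 0 1 := by
    apply ContinuousOn.intervalIntegrable
    intro x hx
    rw [uIcc_of_le (by norm_num)] at hx
    exact (ContinuousAt.rpow_const (by fun_prop)
      (Or.inl (by have := hx.1; intro hc; nlinarith))).continuousWithinAt
  have hint2 : IntervalIntegrable (fun u : ℝ => (z + (1 - u)) ^ (-q)) volume 0 1 := by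
    apply ContinuousOn.intervalIntegrable
    intro x hx
    rw [uIcc_of_le (by norm_num)] at hx
    exact (ContinuousAt.rpow_const (by fun_prop)
      (Or.inl (by have := hx.2; intro hc; nlinarith))).continuousWithinAt
  have hrefl : (∫ u in (0:ℝ)..1, (z + (1 - u)) ^ (-q)) = ∫ u in (0:ℝ)..1, (z + u) ^ (-q) := by
    have := intervalIntegral.integral_comp_sub_left (a := (0:ℝ)) (b := 1)
      (fun u : ℝ => (z + u) ^ (-q)) 1
    simpa using this
  have hmono : (∫ u in (0:ℝ)..1, 2 * (z + 1/2) ^ (-q)) ≤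
      ∫ u in (0:ℝ)..1, ((z + u) ^ (-q) + (z + (1-u)) ^ (-q)) := by
    apply intervalIntegral.integral_mono_on (by norm_num)
      (intervalIntegrable_const) (hint.add hint2)
    intro x hx
    have h := rpow_neg_midpoint hq (a := z + x) (b := z + (1-x))
      (by have := hx.1; nlinarith) (by have := hx.2; nlinarith)
    calc 2 * (z + 1/2) ^ (-q) = 2 * ((z + x + (z + (1-x)))/2) ^ (-q) := by ring_nf
      _ ≤ _ := h
  rw [intervalIntegral.integral_const, intervalIntegral.integral_add hint hint2, hrefl] at hmono
  simp only [smul_eq_mul] at hmono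
  rw [← hcomp]
  linarith

/-- `t_p(s)`, with the convention `0^(3-2s) = 0` (automatic for `rpow`). -/
noncomputable def tFn (s : ℝ) (p : ℕ) : ℝ :=
  |(p : ℝ) - 2| ^ (3 - 2 * s) - 4 * |(p : ℝ) - 1| ^ (3 - 2 * s) + 6 * (p : ℝ) ^ (3 - 2 * s)
    - 4 * ((p : ℝ) + 1) ^ (3 - 2 * s) + ((p : ℝ) + 2) ^ (3 - 2 * s)

/-- `t₁(s) = 7 + 3^(3-2s) - 2^(5-2s)`. -/
noncomputable def t1 (s : ℝ) : ℝ := 7 + (3 : ℝ) ^ (3 - 2 * s) - (2 : ℝ) ^ (5 - 2 * s)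

/-- `A_s = 1/(2 Γ(4-2s) cos(sπ))`. -/
noncomputable def Acoef (s : ℝ) : ℝ := 1 / (2 * Real.Gamma (4 - 2 * s) * Real.cos (s * Real.pi))

namespace Stmt15

noncomputable def f0 (s x : ℝ) : ℝ := x ^ (3-2*s)
noncomputable def f1 (s x : ℝ) : ℝ := (3-2*s) * x ^ (2-2*s)
noncomputable def f2 (s x : ℝ) : ℝ := ((3-2*s)*(2-2*s)) * x ^ (1-2*s)
noncomputable def f3 (s x : ℝ) : ℝ := ((3-2*s)*(2-2*s)*(1-2*s)) * x ^ (-(2*s))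

variable {s : ℝ}

lemma hd0 (hs : 0 < s) (hs2 : s < 1/2) (x : ℝ) : HasDerivAt (f0 s) (f1 s x) x := by
  have h := Real.hasDerivAt_rpow_const (x := x) (p := 3-2*s) (Or.inr (by linarith))
  unfold f0 f1
  simpa [f0, f1, show 3-2*s-1 = 2-2*s by ring] using h

lemma hd1 (hs : 0 < s) (hs2 : s < 1/2) (x : ℝ) : HasDerivAt (f1 s) (f2 s x) x := by
  have h : HasDerivAt (fun x : ℝ => (3-2*s) * x ^ (2-2*s)) ((3-2*s) * ((2-2*s) * x ^ (2-2*s-1))) x :=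
    (Real.hasDerivAt_rpow_const (x := x) (p := 2-2*s) (Or.inr (by linarith))).const_mul (3-2*s)
  unfold f1 f2
  convert h using 1
  rw [show 2-2*s-1 = 1-2*s by ring]; ring

lemma hd2 (hs : 0 < s) (hs2 : s < 1/2) {x : ℝ} (hx : x ≠ 0) : HasDerivAt (f2 s) (f3 s x) x := by
  have h : HasDerivAt (fun x : ℝ => ((3-2*s)*(2-2*s)) * x ^ (1-2*s)) (((3-2*s)*(2-2*s)) * ((1-2*s) * x ^ (1-2*s-1))) x :=
    (Real.hasDerivAt_rpow_const (x := x) (p := 1-2*s) (Or.inl hx)).const_mul ((3-2*s)*(2-2*s))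
  unfold f2 f3
  convert h using 1
  rw [show 1-2*s-1 = -(2*s) by ring]; ring

lemma cont_f1 (hs : 0 < s) (hs2 : s < 1/2) : Continuous (f1 s) := by
  apply continuous_const.mul
  rw [continuous_iff_continuousAt]
  intro x
  exact Real.continuousAt_rpow_const x _ (Or.inr (by linarith))

lemma cont_f2 (hs : 0 < s) (hs2 : s < 1/2) : Continuous (f2 s) := by
  apply continuous_const.mul
  rw [continuous_iff_continuousAt]
  intro x
  exact Real.continuousAt_rpow_const x _ (Or.inr (by linarith))

lemma cont_f3 (hs : 0 < s) (hs2 : s < 1/2) {x : ℝ} (hx : x ≠ 0) :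
    ContinuousAt (f3 s) x :=
  (Real.continuousAt_rpow_const x _ (Or.inl hx)).const_mul _


lemma cont_P2 (hs : 0 < s) (hs2 : s < 1/2) :
    Continuous (fun y : ℝ => f1 s (y+2) - 2 * f1 s (y+1) + f1 s y) := by
  have h := cont_f1 (s := s) hs hs2
  fun_prop

lemma cont_R1 (hs : 0 < s) (hs2 : s < 1/2) :
    Continuous (fun z : ℝ => f2 s (z+1) - f2 s z) := by
  have h := cont_f2 (s := s) hs hs2
  fun_prop

/-- FTC for R1. -/
lemma R1_int (hs : 0 < s) (hs2 : s < 1/2) {z : ℝ} (hz : 0 < z) :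
    f2 s (z+1) - f2 s z = ∫ u in z..(z+1), f3 s u := by
  rw [intervalIntegral.integral_eq_sub_of_hasDerivAt (f := f2 s) (f' := f3 s)]
  · intro x hx
    rw [uIcc_of_le (by linarith)] at hx
    exact hd2 hs hs2 (by have := hx.1; intro hc; nlinarith)
  · apply ContinuousOn.intervalIntegrable
    intro x hx
    rw [uIcc_of_le (by linarith)] at hx
    exact (cont_f3 hs hs2 (by have := hx.1; intro hc; nlinarith)).continuousWithinAt

lemma f3_eq (x : ℝ) : f3 s x = ((3-2*s)*(2-2*s)*(1-2*s)) * x ^ (-(2*s)) := rfl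

lemma R1_bound (hs : 0 < s) (hs2 : s < 1/2) {z : ℝ} (hz : 0 < z) :
    ((3-2*s)*(2-2*s)*(1-2*s)) * (z + 1/2) ^ (-(2*s)) ≤ f2 s (z+1) - f2 s z := by
  have hc : (0:ℝ) < (3-2*s)*(2-2*s)*(1-2*s) := mul_pos (mul_pos (by linarith) (by linarith)) (by linarith)
  rw [R1_int hs hs2 hz]
  have : (∫ u in z..(z+1), f3 s u) = ((3-2*s)*(2-2*s)*(1-2*s)) * ∫ u in z..(z+1), u ^ (-(2*s)) := by
    simp only [f3_eq]
    rw [intervalIntegral.integral_const_mul]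
  rw [this]
  have := avg_rpow_neg (q := 2*s) (z := z) (by linarith) hz
  nlinarith

lemma P2_int (hs : 0 < s) (hs2 : s < 1/2) (y : ℝ) :
    f1 s (y+2) - 2 * f1 s (y+1) + f1 s y = ∫ v in y..(y+1), (f2 s (v+1) - f2 s v) := by
  have hder : ∀ v : ℝ, HasDerivAt (fun v => f1 s (v+1) - f1 s v) (f2 s (v+1) - f2 s v) v := by
    intro v
    have h1 : HasDerivAt (fun v : ℝ => f1 s (v+1)) (f2 s (v+1)) v := by
      have := (hd1 hs hs2 (v+1)).comp v ((hasDerivAt_id v).add_const 1)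
      simpa [Function.comp_def] using this
    exact h1.sub (hd1 hs hs2 v)
  rw [intervalIntegral.integral_eq_sub_of_hasDerivAt (fun x _ => hder x)
    ((cont_R1 hs hs2).intervalIntegrable _ _)]
  ring

lemma ae_ne_zero : ∀ᵐ (v:ℝ) ∂(volume : Measure ℝ), v ≠ 0 := by
  rw [MeasureTheory.ae_iff]
  simpa using measure_singleton (0:ℝ)

lemma P2_bound (hs : 0 < s) (hs2 : s < 1/2) {y : ℝ} (hy : 0 ≤ y) :
    ((3-2*s)*(2-2*s)*(1-2*s)) * (y + 1) ^ (-(2*s)) ≤ f1 s (y+2) - 2 * f1 s (y+1) + f1 s y := by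
  set c := (3-2*s)*(2-2*s)*(1-2*s) with hcdef
  have hc : (0:ℝ) < c := mul_pos (mul_pos (by linarith) (by linarith)) (by linarith)
  rw [P2_int hs hs2 y]
  have hint1 : IntervalIntegrable (fun v : ℝ => c * (v + 1/2) ^ (-(2*s))) volume y (y+1) := by
    apply ContinuousOn.intervalIntegrable
    intro x hx
    rw [uIcc_of_le (by linarith)] at hx
    exact (continuousAt_const.mul (ContinuousAt.rpow_const (by fun_prop)
      (Or.inl (by have := hx.1; intro hc; nlinarith)))).continuousWithinAt
  have step1 : (∫ v in y..(y+1), c * (v + 1/2) ^ (-(2*s))) ≤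
      ∫ v in y..(y+1), (f2 s (v+1) - f2 s v) := by
    apply intervalIntegral.integral_mono_ae_restrict (by linarith) hint1
      ((cont_R1 hs hs2).intervalIntegrable _ _)
    filter_upwards [MeasureTheory.ae_restrict_of_ae ae_ne_zero,
      MeasureTheory.ae_restrict_mem measurableSet_Icc] with v hv0 hvmem
    have hv : 0 < v := lt_of_le_of_ne (le_trans hy hvmem.1) (Ne.symm hv0)
    exact R1_bound hs hs2 hv
  have step2 : c * (y + 1) ^ (-(2*s)) ≤ ∫ v in y..(y+1), c * (v + 1/2) ^ (-(2*s)) := by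
    rw [intervalIntegral.integral_const_mul]
    have hcomp : (∫ v in y..(y+1), (v + 1/2) ^ (-(2*s))) =
        ∫ u in (y+1/2)..((y+1/2)+1), u ^ (-(2*s)) := by
      have := intervalIntegral.integral_comp_add_right (a := y) (b := y+1)
        (fun u : ℝ => u ^ (-(2*s))) (1/2)
      rw [this]
      congr 1 <;> ring
    rw [hcomp]
    have havg := avg_rpow_neg (q := 2*s) (z := y+1/2) (by linarith) (by linarith)
    have : (y+1/2) + 1/2 = y + 1 := by ring
    rw [this] at havg
    nlinarith
  linarith

lemma Dr_int (hs : 0 < s) (hs2 : s < 1/2) (x : ℝ) :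
    f0 s (x+3) - 3 * f0 s (x+2) + 3 * f0 s (x+1) - f0 s x
      = ∫ w in x..(x+1), (f1 s (w+2) - 2 * f1 s (w+1) + f1 s w) := by
  have hder : ∀ w : ℝ, HasDerivAt (fun w => f0 s (w+2) - 2 * f0 s (w+1) + f0 s w)
      (f1 s (w+2) - 2 * f1 s (w+1) + f1 s w) w := by
    intro w
    have h2 : HasDerivAt (fun w : ℝ => f0 s (w+2)) (f1 s (w+2)) w := by
      have := (hd0 hs hs2 (w+2)).comp w ((hasDerivAt_id w).add_const 2)
      simpa [Function.comp_def] using this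
    have h1 : HasDerivAt (fun w : ℝ => f0 s (w+1)) (f1 s (w+1)) w := by
      have := (hd0 hs hs2 (w+1)).comp w ((hasDerivAt_id w).add_const 1)
      simpa [Function.comp_def] using this
    exact (h2.sub (h1.const_mul 2)).add (hd0 hs hs2 w)
  rw [intervalIntegral.integral_eq_sub_of_hasDerivAt (fun w _ => hder w)
    ((cont_P2 hs hs2).intervalIntegrable _ _)]
  ring

lemma Dr_bound (hs : 0 < s) (hs2 : s < 1/2) {x : ℝ} (hx : 0 ≤ x) :
    ((3-2*s)*(2-2*s)*(1-2*s)) * (x + 3/2) ^ (-(2*s)) ≤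
      f0 s (x+3) - 3 * f0 s (x+2) + 3 * f0 s (x+1) - f0 s x := by
  set c := (3-2*s)*(2-2*s)*(1-2*s) with hcdef
  have hc : (0:ℝ) < c := mul_pos (mul_pos (by linarith) (by linarith)) (by linarith)
  rw [Dr_int hs hs2 x]
  have hint1 : IntervalIntegrable (fun w : ℝ => c * (w + 1) ^ (-(2*s))) volume x (x+1) := by
    apply ContinuousOn.intervalIntegrable
    intro w hw
    rw [uIcc_of_le (by linarith)] at hw
    exact (continuousAt_const.mul (ContinuousAt.rpow_const (by fun_prop)
      (Or.inl (by have := hw.1; intro hc; nlinarith)))).continuousWithinAt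
  have step1 : (∫ w in x..(x+1), c * (w + 1) ^ (-(2*s))) ≤
      ∫ w in x..(x+1), (f1 s (w+2) - 2 * f1 s (w+1) + f1 s w) := by
    apply intervalIntegral.integral_mono_on (by linarith) hint1
      ((cont_P2 hs hs2).intervalIntegrable _ _)
    intro w hw
    exact P2_bound hs hs2 (le_trans hx hw.1)
  have step2 : c * (x + 3/2) ^ (-(2*s)) ≤ ∫ w in x..(x+1), c * (w + 1) ^ (-(2*s)) := by
    rw [intervalIntegral.integral_const_mul]
    have hcomp : (∫ w in x..(x+1), (w + 1) ^ (-(2*s))) =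
        ∫ u in (x+1)..((x+1)+1), u ^ (-(2*s)) := by
      have := intervalIntegral.integral_comp_add_right (a := x) (b := x+1)
        (fun u : ℝ => u ^ (-(2*s))) 1
      rw [this]
    rw [hcomp]
    have havg := avg_rpow_neg (q := 2*s) (z := x+1) (by linarith) (by linarith)
    have : (x+1) + 1/2 = x + 3/2 := by ring
    rw [this] at havg
    nlinarith
  linarith

lemma R2_nonpos (hs : 0 < s) (hs2 : s < 1/2) {v : ℝ} (hv : 0 ≤ v) :
    (f2 s (v+2) - f2 s (v+1)) - (f2 s (v+1) - f2 s v) ≤ 0 := by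
  rcases eq_or_lt_of_le hv with rfl | hv
  · -- v = 0 : explicit computation
    have h0 : f2 s (0:ℝ) = 0 := by
      simp [f2, Real.zero_rpow (by intro hc; nlinarith : 1-2*s ≠ 0)]
    have h1 : f2 s (1:ℝ) = (3-2*s)*(2-2*s) := by simp [f2]
    have h2 : f2 s (2:ℝ) ≤ 2 * ((3-2*s)*(2-2*s)) := by
      have : (2:ℝ) ^ (1-2*s) ≤ 2 ^ (1:ℝ) :=
        Real.rpow_le_rpow_of_exponent_le (by norm_num) (by linarith)
      rw [Real.rpow_one] at this
      have hc : (0:ℝ) < (3-2*s)*(2-2*s) := mul_pos (by linarith) (by linarith)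
      calc f2 s 2 = ((3-2*s)*(2-2*s)) * (2:ℝ) ^ (1-2*s) := rfl
        _ ≤ ((3-2*s)*(2-2*s)) * 2 := by nlinarith
        _ = 2 * ((3-2*s)*(2-2*s)) := by ring
    norm_num
    rw [h0, h1]
    linarith
  · -- v > 0 : integral comparison
    have e1 : f2 s (v+1+1) - f2 s (v+1) = ∫ u in (v+1)..(v+2), f3 s u := by
      rw [show v+(2:ℝ) = v+1+1 by ring]
      exact R1_int hs hs2 (by linarith)
    have e0 : f2 s (v+1) - f2 s v = ∫ u in v..(v+1), f3 s u := R1_int hs hs2 hv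
    have e2 : (∫ u in (v+1)..(v+2), f3 s u) = ∫ u in v..(v+1), f3 s (u+1) := by
      rw [show v+(2:ℝ) = v+1+1 by ring]
      exact (intervalIntegral.integral_comp_add_right (a := v) (b := v+1) (f3 s) 1).symm
    have hc : (0:ℝ) < (3-2*s)*(2-2*s)*(1-2*s) :=
      mul_pos (mul_pos (by linarith) (by linarith)) (by linarith)
    have hmono : (∫ u in v..(v+1), f3 s (u+1)) ≤ ∫ u in v..(v+1), f3 s u := by
      simp only [f3_eq]
      apply intervalIntegral.integral_mono_on (by linarith)
      · apply ContinuousOn.intervalIntegrable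
        intro x hx
        rw [uIcc_of_le (by linarith)] at hx
        exact (continuousAt_const.mul (ContinuousAt.rpow_const (by fun_prop)
          (Or.inl (by have := hx.1; intro hcc; nlinarith)))).continuousWithinAt
      · apply ContinuousOn.intervalIntegrable
        intro x hx
        rw [uIcc_of_le (by linarith)] at hx
        exact (continuousAt_const.mul (ContinuousAt.rpow_const (by fun_prop)
          (Or.inl (by have := hx.1; intro hcc; nlinarith)))).continuousWithinAt
      · intro u hu
        have hu0 : 0 < u := lt_of_lt_of_le hv hu.1
        have : (u+1) ^ (-(2*s)) ≤ u ^ (-(2*s)) :=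
          Real.rpow_le_rpow_of_nonpos hu0 (by linarith) (by linarith)
        nlinarith
    have : v + 1 + 1 = v + 2 := by ring
    rw [show f2 s (v+2) = f2 s (v+1+1) by rw [this]]
    rw [e1, e0, e2]
    linarith

lemma P3_nonpos (hs : 0 < s) (hs2 : s < 1/2) {y : ℝ} (hy : 0 ≤ y) :
    (f1 s (y+3) - 2 * f1 s (y+2) + f1 s (y+1)) - (f1 s (y+2) - 2 * f1 s (y+1) + f1 s y) ≤ 0 := by
  have hder : ∀ v : ℝ, HasDerivAt (fun v => f1 s (v+2) - 2 * f1 s (v+1) + f1 s v)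
      ((f2 s (v+2) - f2 s (v+1)) - (f2 s (v+1) - f2 s v)) v := by
    intro v
    have h2 : HasDerivAt (fun v : ℝ => f1 s (v+2)) (f2 s (v+2)) v := by
      have := (hd1 hs hs2 (v+2)).comp v ((hasDerivAt_id v).add_const 2)
      simpa [Function.comp_def] using this
    have h1 : HasDerivAt (fun v : ℝ => f1 s (v+1)) (f2 s (v+1)) v := by
      have := (hd1 hs hs2 (v+1)).comp v ((hasDerivAt_id v).add_const 1)
      simpa [Function.comp_def] using this
    have := (h2.sub (h1.const_mul 2)).add (hd1 hs hs2 v)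
    rw [show (f2 s (v+2) - f2 s (v+1)) - (f2 s (v+1) - f2 s v)
      = f2 s (v+2) - 2 * f2 s (v+1) + f2 s v by ring]
    exact this
  have cR2 : Continuous (fun v : ℝ => (f2 s (v+2) - f2 s (v+1)) - (f2 s (v+1) - f2 s v)) := by
    have h := cont_f2 (s := s) hs hs2
    fun_prop
  have key : (f1 s ((y+1)+2) - 2 * f1 s ((y+1)+1) + f1 s (y+1))
      - (f1 s (y+2) - 2 * f1 s (y+1) + f1 s y)
      = ∫ v in y..(y+1), ((f2 s (v+2) - f2 s (v+1)) - (f2 s (v+1) - f2 s v)) := by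
    rw [intervalIntegral.integral_eq_sub_of_hasDerivAt (fun v _ => hder v)
      (cR2.intervalIntegrable _ _)]
  have hneg : (∫ v in y..(y+1), ((f2 s (v+2) - f2 s (v+1)) - (f2 s (v+1) - f2 s v))) ≤ 0 := by
    have := intervalIntegral.integral_mono_on (μ := volume) (a := y) (b := y+1)
      (f := fun v => (f2 s (v+2) - f2 s (v+1)) - (f2 s (v+1) - f2 s v))
      (g := fun _ => (0:ℝ)) (by linarith)
      (cR2.intervalIntegrable _ _) intervalIntegrable_const
      (fun u hu => R2_nonpos hs hs2 (le_trans hy hu.1))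
    simpa using this
  have e : y + 1 + 2 = y + 3 := by ring
  have e2 : y + 1 + 1 = y + 2 := by ring
  rw [e, e2] at key
  linarith [key, hneg]

lemma Tr_nonpos (hs : 0 < s) (hs2 : s < 1/2) {x : ℝ} (hx : 0 ≤ x) :
    f0 s (x+4) - 4 * f0 s (x+3) + 6 * f0 s (x+2) - 4 * f0 s (x+1) + f0 s x ≤ 0 := by
  have hshift : ∀ (d : ℝ) (w : ℝ), HasDerivAt (fun w : ℝ => f0 s (w+d)) (f1 s (w+d)) w := by
    intro d w
    have := (hd0 hs hs2 (w+d)).comp w ((hasDerivAt_id w).add_const d)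
    simpa [Function.comp_def] using this
  have hder : ∀ w : ℝ, HasDerivAt (fun w => f0 s (w+3) - 3*f0 s (w+2) + 3*f0 s (w+1) - f0 s w)
      (f1 s (w+3) - 3*f1 s (w+2) + 3*f1 s (w+1) - f1 s w) w := by
    intro w
    have h0 : HasDerivAt (fun w : ℝ => f0 s w) (f1 s w) w := hd0 hs hs2 w
    have := (((hshift 3 w).sub ((hshift 2 w).const_mul 3)).add
      ((hshift 1 w).const_mul 3)).sub h0
    exact this
  have cP3 : Continuous (fun w : ℝ => f1 s (w+3) - 3*f1 s (w+2) + 3*f1 s (w+1) - f1 s w) := by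
    have h := cont_f1 (s := s) hs hs2
    fun_prop
  have key : (f0 s (x+1+3) - 3*f0 s (x+1+2) + 3*f0 s (x+1+1) - f0 s (x+1))
      - (f0 s (x+3) - 3*f0 s (x+2) + 3*f0 s (x+1) - f0 s x)
      = ∫ w in x..(x+1), (f1 s (w+3) - 3*f1 s (w+2) + 3*f1 s (w+1) - f1 s w) := by
    rw [intervalIntegral.integral_eq_sub_of_hasDerivAt (fun w _ => hder w)
      (cP3.intervalIntegrable _ _)]
  have hneg : (∫ w in x..(x+1), (f1 s (w+3) - 3*f1 s (w+2) + 3*f1 s (w+1) - f1 s w)) ≤ 0 := by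
    have := intervalIntegral.integral_mono_on (μ := volume) (a := x) (b := x+1)
      (f := fun w => f1 s (w+3) - 3*f1 s (w+2) + 3*f1 s (w+1) - f1 s w)
      (g := fun _ => (0:ℝ)) (by linarith)
      (cP3.intervalIntegrable _ _) intervalIntegrable_const
      (fun w hw => by
        have h := P3_nonpos hs hs2 (le_trans hx hw.1)
        show f1 s (w+3) - 3*f1 s (w+2) + 3*f1 s (w+1) - f1 s w ≤ 0
        linarith)
    simpa using this
  rw [show x+1+3 = x+4 by ring, show x+1+2 = x+3 by ring, show x+1+1 = x+2 by ring] at key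
  linarith [key, hneg]

/-- Third difference `D(m) = Dr(m-1)` as a function of a real argument. -/
noncomputable def DD (s x : ℝ) : ℝ := f0 s (x+3) - 3*f0 s (x+2) + 3*f0 s (x+1) - f0 s x

lemma DD_bound (hs : 0 < s) (hs2 : s < 1/2) {x : ℝ} (hx : 0 ≤ x) :
    ((3-2*s)*(2-2*s)*(1-2*s)) * (x + 3/2) ^ (-(2*s)) ≤ DD s x :=
  Dr_bound hs hs2 hx

lemma DD_pos (hs : 0 < s) (hs2 : s < 1/2) {x : ℝ} (hx : 0 ≤ x) : 0 < DD s x := by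
  have h := DD_bound hs hs2 hx
  have hc : (0:ℝ) < (3-2*s)*(2-2*s)*(1-2*s) :=
    mul_pos (mul_pos (by linarith) (by linarith)) (by linarith)
  have : (0:ℝ) < (x + 3/2) ^ (-(2*s)) := Real.rpow_pos_of_pos (by linarith) _
  nlinarith

lemma tFn_cast {p : ℕ} (hp : 2 ≤ p) : tFn s p =
    f0 s (((p:ℝ)-2)+4) - 4*f0 s (((p:ℝ)-2)+3) + 6*f0 s (((p:ℝ)-2)+2)
      - 4*f0 s (((p:ℝ)-2)+1) + f0 s ((p:ℝ)-2) := by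
  have h2 : (2:ℝ) ≤ (p:ℝ) := by exact_mod_cast hp
  unfold tFn f0
  rw [abs_of_nonneg (by linarith : (0:ℝ) ≤ (p:ℝ)-2), abs_of_nonneg (by linarith : (0:ℝ) ≤ (p:ℝ)-1),
    show ((p:ℝ)-2)+4 = (p:ℝ)+2 by ring, show ((p:ℝ)-2)+3 = (p:ℝ)+1 by ring,
    show ((p:ℝ)-2)+2 = (p:ℝ) by ring, show ((p:ℝ)-2)+1 = (p:ℝ)-1 by ring]
  ring

lemma tFn_nonpos (hs : 0 < s) (hs2 : s < 1/2) {p : ℕ} (hp : 2 ≤ p) : tFn s p ≤ 0 := by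
  rw [tFn_cast hp]
  refine Tr_nonpos hs hs2 ?_
  have h2 : (2:ℝ) ≤ (p:ℝ) := by exact_mod_cast hp
  linarith

lemma tFn_teles {p : ℕ} (hp : 2 ≤ p) :
    tFn s p = DD s ((p:ℝ)-1) - DD s ((p:ℝ)-2) := by
  rw [tFn_cast hp]
  unfold DD
  rw [show ((p:ℝ)-1)+3 = ((p:ℝ)-2)+4 by ring, show ((p:ℝ)-1)+2 = ((p:ℝ)-2)+3 by ring,
    show ((p:ℝ)-1)+1 = ((p:ℝ)-2)+2 by ring, show (p:ℝ)-1 = ((p:ℝ)-2)+1 by ring]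
  ring

lemma two_rpow_5 : (2:ℝ) ^ (5-2*s) = 4 * (2:ℝ) ^ (3-2*s) := by
  rw [show (5:ℝ)-2*s = 2 + (3-2*s) by ring, Real.rpow_add (by norm_num)]
  norm_num

lemma tFn_one (hs : 0 < s) (hs2 : s < 1/2) : tFn s 1 = t1 s := by
  unfold tFn t1
  rw [two_rpow_5]
  norm_num
  rw [Real.zero_rpow (by intro hc; nlinarith : (3:ℝ)-2*s ≠ 0)]
  ring

lemma tFn_zero (hs : 0 < s) (hs2 : s < 1/2) : tFn s 0 = 2*(2:ℝ)^(3-2*s) - 8 := by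
  unfold tFn
  norm_num
  rw [Real.zero_rpow (by intro hc; nlinarith : (3:ℝ)-2*s ≠ 0)]
  ring

lemma DD_zero (hs : 0 < s) (hs2 : s < 1/2) :
    DD s 0 = (3:ℝ)^(3-2*s) - 3*(2:ℝ)^(3-2*s) + 3 := by
  unfold DD f0
  norm_num
  exact Real.zero_rpow (by intro hc; nlinarith : (3:ℝ)-2*s ≠ 0)

noncomputable def Fsum (s : ℝ) (m : ℕ) : ℝ := ∑ i ∈ Finset.range m, |tFn s (i+1)|

lemma Fsum_zero : Fsum s 0 = 0 := by simp [Fsum]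

lemma Fsum_eq (hs : 0 < s) (hs2 : s < 1/2) (ht1 : 0 < t1 s) {m : ℕ} (hm : 1 ≤ m) :
    Fsum s m = t1 s + DD s 0 - DD s ((m:ℝ)-1) := by
  induction m, hm using Nat.le_induction with
  | base =>
    have : Fsum s 1 = |tFn s 1| := by simp [Fsum]
    rw [this, tFn_one hs hs2, abs_of_pos ht1]
    norm_num
  | succ n hn ih =>
    have hsum : Fsum s (n+1) = Fsum s n + |tFn s (n+1)| := by
      unfold Fsum
      rw [Finset.sum_range_succ]
    have h2 : 2 ≤ n + 1 := by omega
    have htel : tFn s (n+1) = DD s ((n:ℝ)) - DD s ((n:ℝ)-1) := by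
      rw [tFn_teles h2]
      push_cast
      rw [show (n:ℝ) + 1 - 1 = (n:ℝ) by ring, show (n:ℝ) + 1 - 2 = (n:ℝ) - 1 by ring]
    have habs : |tFn s (n+1)| = DD s ((n:ℝ)-1) - DD s (n:ℝ) := by
      rw [abs_of_nonpos (tFn_nonpos hs hs2 h2), htel]
      ring
    rw [hsum, ih, habs]
    push_cast
    ring

lemma Bneg (hs : 0 < s) (hs2 : s < 1/2) : 3 * t1 s - DD s 0 < 0 := by
  have hconc := Real.strictConcaveOn_rpow (p := 1-2*s) (by linarith) (by linarith)
  have h := hconc.2 (Set.mem_Ici.2 (by norm_num : (0:ℝ) ≤ 1))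
    (Set.mem_Ici.2 (by norm_num : (0:ℝ) ≤ 3)) (by norm_num)
    (by norm_num : (0:ℝ) < 1/2) (by norm_num : (0:ℝ) < 1/2) (by norm_num)
  simp only [smul_eq_mul, Real.one_rpow] at h
  rw [show (1:ℝ)/2 * 1 + 1/2 * 3 = 2 by norm_num] at h
  have h3 : (3:ℝ)^(3-2*s) = 9 * 3^(1-2*s) := by
    rw [show (3:ℝ)-2*s = 2 + (1-2*s) by ring, Real.rpow_add (by norm_num)]
    norm_num
  have h2 : (2:ℝ)^(3-2*s) = 4 * 2^(1-2*s) := by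
    rw [show (3:ℝ)-2*s = 2 + (1-2*s) by ring, Real.rpow_add (by norm_num)]
    norm_num
  rw [DD_zero hs hs2]
  unfold t1
  rw [two_rpow_5, h3, h2]
  nlinarith

lemma row_lt (hs : 0 < s) (hs2 : s < 1/2) (ht1 : 0 < t1 s) {N : ℕ} (hN : 2 ≤ N)
    (hbound : t1 s ≤ ((1-2*s)*(1-s)*(3-2*s)) * ((N:ℝ)/2) ^ (-(2*s)))
    {a b : ℕ} (hab : a + b + 2 = N) :
    Fsum s a + Fsum s b < tFn s 0 := by
  have ht0 : tFn s 0 = 2*DD s 0 - 2*t1 s := by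
    rw [tFn_zero hs hs2, DD_zero hs hs2]
    unfold t1
    rw [two_rpow_5]
    ring
  have h4 : (4:ℝ) < 2^(3-2*s) := by
    calc (4:ℝ) = 2^(2:ℝ) := by norm_num
      _ < 2^(3-2*s) := Real.rpow_lt_rpow_of_exponent_lt one_lt_two (by linarith)
  have ht0pos : 0 < tFn s 0 := by rw [tFn_zero hs hs2]; linarith
  rcases Nat.eq_zero_or_pos a with ha | ha
  · rcases Nat.eq_zero_or_pos b with hb | hb
    · subst ha; subst hb
      rw [Fsum_zero]
      simpa using ht0pos
    · subst ha
      rw [Fsum_zero, Fsum_eq hs hs2 ht1 hb, ht0]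
      have hB := Bneg hs hs2
      have hpos : 0 < DD s ((b:ℝ)-1) := by
        apply DD_pos hs hs2
        have : (1:ℝ) ≤ (b:ℝ) := by exact_mod_cast hb
        linarith
      linarith
  · rcases Nat.eq_zero_or_pos b with hb | hb
    · subst hb
      rw [Fsum_zero, Fsum_eq hs hs2 ht1 ha, ht0]
      have hB := Bneg hs hs2
      have hpos : 0 < DD s ((a:ℝ)-1) := by
        apply DD_pos hs hs2
        have : (1:ℝ) ≤ (a:ℝ) := by exact_mod_cast ha
        linarith
      linarith
    · -- both a, b ≥ 1
      have ha1 : (1:ℝ) ≤ (a:ℝ) := by exact_mod_cast ha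
      have hb1 : (1:ℝ) ≤ (b:ℝ) := by exact_mod_cast hb
      set c := (3-2*s)*(2-2*s)*(1-2*s) with hcdef
      have hc : (0:ℝ) < c := mul_pos (mul_pos (by linarith) (by linarith)) (by linarith)
      have hDa : c * ((a:ℝ)+1/2) ^ (-(2*s)) ≤ DD s ((a:ℝ)-1) := by
        have := DD_bound hs hs2 (x := (a:ℝ)-1) (by linarith)
        rw [show (a:ℝ)-1+3/2 = (a:ℝ)+1/2 by ring] at this
        exact this
      have hDb : c * ((b:ℝ)+1/2) ^ (-(2*s)) ≤ DD s ((b:ℝ)-1) := by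
        have := DD_bound hs hs2 (x := (b:ℝ)-1) (by linarith)
        rw [show (b:ℝ)-1+3/2 = (b:ℝ)+1/2 by ring] at this
        exact this
      have hmid : 2 * ((((a:ℝ)+1/2) + ((b:ℝ)+1/2))/2) ^ (-(2*s)) ≤
          ((a:ℝ)+1/2) ^ (-(2*s)) + ((b:ℝ)+1/2) ^ (-(2*s)) :=
        rpow_neg_midpoint (by linarith) (by linarith) (by linarith)
      have hNcast : (a:ℝ) + (b:ℝ) + 2 = (N:ℝ) := by exact_mod_cast hab
      have hmideq : (((a:ℝ)+1/2) + ((b:ℝ)+1/2))/2 = ((N:ℝ)-1)/2 := by linarith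
      have hstrict : ((N:ℝ)/2) ^ (-(2*s)) < (((N:ℝ)-1)/2) ^ (-(2*s)) :=
        rpow_neg_strict_anti (by linarith) (by linarith) (by linarith)
      have hkey : 4 * t1 s < DD s ((a:ℝ)-1) + DD s ((b:ℝ)-1) := by
        have hcg : c = 2 * ((1-2*s)*(1-s)*(3-2*s)) := by rw [hcdef]; ring
        have e1 : 4 * t1 s ≤ 2 * c * ((N:ℝ)/2) ^ (-(2*s)) := by
          rw [hcg]; nlinarith [Real.rpow_pos_of_pos (show (0:ℝ) < (N:ℝ)/2 by linarith) (-(2*s))]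
        have e2 : 2 * c * ((N:ℝ)/2) ^ (-(2*s)) < 2 * c * (((N:ℝ)-1)/2) ^ (-(2*s)) := by
          nlinarith
        rw [hmideq] at hmid
        nlinarith
      rw [Fsum_eq hs hs2 ht1 ha, Fsum_eq hs hs2 ht1 hb, ht0]
      linarith

lemma total_sum (hs : 0 < s) (hs2 : s < 1/2) {n a : ℕ} (ha : a < n) :
    ∑ j ∈ Finset.range n, |tFn s (((a:ℤ) - (j:ℤ)).natAbs)|
      = |tFn s 0| + Fsum s a + Fsum s (n - 1 - a) := by
  have hsplit : ∑ j ∈ Finset.range (a+1), |tFn s (((a:ℤ) - (j:ℤ)).natAbs)|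
      + ∑ j ∈ Finset.Ico (a+1) n, |tFn s (((a:ℤ) - (j:ℤ)).natAbs)|
      = ∑ j ∈ Finset.range n, |tFn s (((a:ℤ) - (j:ℤ)).natAbs)| := by
    rw [Finset.range_eq_Ico]
    exact (Finset.sum_Ico_consecutive (fun j => |tFn s (((a:ℤ) - (j:ℤ)).natAbs)|) (by omega : 0 ≤ a + 1) (by omega : a + 1 ≤ n)).trans (by rw [Finset.range_eq_Ico])
  rw [← hsplit]
  have hleft : ∑ j ∈ Finset.range (a+1), |tFn s (((a:ℤ) - (j:ℤ)).natAbs)|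
      = |tFn s 0| + Fsum s a := by
    have h1 : ∑ j ∈ Finset.range (a+1), |tFn s (((a:ℤ) - (j:ℤ)).natAbs)|
        = ∑ j ∈ Finset.range (a+1), |tFn s (a - j)| := by
      apply Finset.sum_congr rfl
      intro j hj
      have hj' : j ≤ a := by simpa [Nat.lt_succ_iff] using Finset.mem_range.1 hj
      have harg : ((a:ℤ) - (j:ℤ)).natAbs = a - j := by omega
      rw [harg]
    have h2 : ∑ j ∈ Finset.range (a+1), |tFn s (a - j)|
        = ∑ j ∈ Finset.range (a+1), |tFn s j| := by
      have := Finset.sum_range_reflect (fun i => |tFn s i|) (a+1)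
      simpa using this
    rw [h1, h2, Finset.sum_range_succ']
    unfold Fsum
    ring
  have hright : ∑ j ∈ Finset.Ico (a+1) n, |tFn s (((a:ℤ) - (j:ℤ)).natAbs)|
      = Fsum s (n - 1 - a) := by
    rw [Finset.sum_Ico_eq_sum_range]
    have hb : n - (a+1) = n - 1 - a := by omega
    rw [hb]
    apply Finset.sum_congr rfl
    intro i hi
    have harg : (((a:ℤ) - ((a+1+i : ℕ) : ℤ)).natAbs) = i + 1 := by push_cast; omega
    rw [harg]
  rw [hleft, hright]

end Stmt15

theorem stmt15 (s : ℝ) (hs : s ∈ Set.Ioo (0 : ℝ) (1 / 2)) (ht1 : 0 < t1 s)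
    (h : ℝ) (hh : 0 < h) (N : ℕ) (hN : 2 ≤ N)
    (hNle : (N : ℝ) ≤ 2 * (((1 - 2 * s) * (1 - s) * (3 - 2 * s)) / t1 s) ^ (1 / (2 * s)))
    (S : Matrix (Fin (N - 1)) (Fin (N - 1)) ℝ)
    (hS : ∀ k j, S k j =
      Acoef s * h ^ (1 - 2 * s) * tFn s (((k : ℕ) : ℤ) - ((j : ℕ) : ℤ)).natAbs) :
    ∀ k, ∑ j ∈ Finset.univ.filter (fun j => j ≠ k), |S k j| < S k k := by
  obtain ⟨hs0, hs2⟩ := hs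
  intro k
  -- positivity of the prefactor
  have hπ := Real.pi_pos
  have hcos : 0 < Real.cos (s * Real.pi) := by
    apply Real.cos_pos_of_mem_Ioo
    constructor
    · nlinarith
    · nlinarith
  have hΓ : 0 < Real.Gamma (4 - 2 * s) := Real.Gamma_pos_of_pos (by linarith)
  have hA : 0 < Acoef s := by
    unfold Acoef
    positivity
  have hCpos : 0 < Acoef s * h ^ (1 - 2 * s) :=
    mul_pos hA (Real.rpow_pos_of_pos hh _)
  set C := Acoef s * h ^ (1 - 2 * s) with hC
  -- derive the bound on t1
  have hγ : 0 < (1 - 2 * s) * (1 - s) * (3 - 2 * s) :=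
    mul_pos (mul_pos (by linarith) (by linarith)) (by linarith)
  have hq : 0 < 2 * s := by linarith
  have hNR : (2:ℝ) ≤ (N:ℝ) := by exact_mod_cast hN
  have hbound : t1 s ≤ ((1 - 2 * s) * (1 - s) * (3 - 2 * s)) * ((N:ℝ)/2) ^ (-(2*s)) := by
    set γ := (1 - 2 * s) * (1 - s) * (3 - 2 * s) with hγdef
    have hN2 : (N:ℝ)/2 ≤ (γ / t1 s) ^ (1/(2*s)) := by linarith
    have hNpos : (0:ℝ) < (N:ℝ)/2 := by linarith
    have h1 : ((N:ℝ)/2) ^ (2*s) ≤ ((γ / t1 s) ^ (1/(2*s))) ^ (2*s) :=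
      Real.rpow_le_rpow (le_of_lt hNpos) hN2 (le_of_lt hq)
    have h2 : ((γ / t1 s) ^ (1/(2*s))) ^ (2*s) = γ / t1 s := by
      rw [← Real.rpow_mul (le_of_lt (div_pos hγ ht1)), one_div,
        inv_mul_cancel₀ (ne_of_gt hq), Real.rpow_one]
    rw [h2] at h1
    have hp : 0 < ((N:ℝ)/2) ^ (2*s) := Real.rpow_pos_of_pos hNpos _
    have h3 : t1 s * ((N:ℝ)/2) ^ (2*s) ≤ γ := by
      have := mul_le_mul_of_nonneg_left h1 (le_of_lt ht1)
      calc t1 s * ((N:ℝ)/2) ^ (2*s) ≤ t1 s * (γ / t1 s) := this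
        _ = γ := by field_simp
    rw [Real.rpow_neg (le_of_lt hNpos), ← div_eq_mul_inv, le_div_iff₀ hp]
    exact h3
  -- sum manipulation
  have hn1 : 1 ≤ N - 1 := by omega
  have hkn : (k:ℕ) < N - 1 := k.2
  have hab : (k:ℕ) + ((N-1) - 1 - (k:ℕ)) + 2 = N := by omega
  have hdiag : S k k = C * tFn s 0 := by
    rw [hS k k]
    simp
  have hsum : ∑ j ∈ Finset.univ.filter (fun j => j ≠ k), |S k j|
      = C * (Stmt15.Fsum s (k:ℕ) + Stmt15.Fsum s ((N-1) - 1 - (k:ℕ))) := by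
    have habs : ∀ j : Fin (N-1), |S k j|
        = C * |tFn s ((((k:ℕ):ℤ) - ((j:ℕ):ℤ)).natAbs)| := by
      intro j
      rw [hS k j, abs_mul, abs_of_pos hCpos]
    calc ∑ j ∈ Finset.univ.filter (fun j => j ≠ k), |S k j|
        = ∑ j ∈ Finset.univ.filter (fun j => j ≠ k),
            C * |tFn s ((((k:ℕ):ℤ) - ((j:ℕ):ℤ)).natAbs)| :=
          Finset.sum_congr rfl (fun j _ => habs j)
      _ = C * ∑ j ∈ Finset.univ.filter (fun j => j ≠ k),
            |tFn s ((((k:ℕ):ℤ) - ((j:ℕ):ℤ)).natAbs)| := by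
          rw [Finset.mul_sum]
      _ = C * (Stmt15.Fsum s (k:ℕ) + Stmt15.Fsum s ((N-1) - 1 - (k:ℕ))) := by
          congr 1
          have herase : (Finset.univ.filter (fun j => j ≠ k))
              = (Finset.univ : Finset (Fin (N-1))).erase k := by
            ext j
            simp [Finset.mem_erase, and_comm]
          rw [herase, Finset.sum_erase_eq_sub (Finset.mem_univ k)]
          have htot : ∑ j : Fin (N-1), |tFn s ((((k:ℕ):ℤ) - ((j:ℕ):ℤ)).natAbs)|
              = |tFn s 0| + Stmt15.Fsum s (k:ℕ) + Stmt15.Fsum s ((N-1) - 1 - (k:ℕ)) := by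
            rw [Fin.sum_univ_eq_sum_range
              (fun j => |tFn s ((((k:ℕ):ℤ) - ((j:ℕ):ℤ)).natAbs)|) (N-1)]
            exact Stmt15.total_sum hs0 hs2 hkn
          rw [htot]
          simp
          ring
  rw [hsum, hdiag]
  have hrow := Stmt15.row_lt hs0 hs2 ht1 hN hbound hab
  exact (mul_lt_mul_iff_right₀ hCpos).mpr hrow
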